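/- Let m ≥ 2 and let v_1, …, v_m ∈ ℝ^m ∖ {0} be such that v_i is i-visible for each i ∈ {1, …, m}. Let V := span_ℝ(v_1, …, v_m). If no nonzero subspace of V decomposes into a direct sum of two nonzero coordinate-supported subspaces, then dim(V) = m − 1. -/

import Mathlib

def VisibleAt {m : ℕ} (i : Fin m) (v : Fin m → ℝ) : Prop :=
  (∀ j, j ≠ i → 0 ≤ v j) ∧ ∑ j ∈ Finset.univ.erase i, v j ≤ -(v i)

def coordSubspace {m : ℕ} (I : Set (Fin m)) : Submodule ℝ (Fin m → ℝ) where
  carrier := { v | ∀ j ∉ I, v j = 0 }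
  add_mem' := by
    intro a b ha hb j hj
    simp [Pi.add_apply, ha j hj, hb j hj]
  zero_mem' := by
    intro j hj
    rfl
  smul_mem' := by
    intro c a ha j hj
    simp [Pi.smul_apply, ha j hj]

def DecomposesCoord {m : ℕ} (W : Submodule ℝ (Fin m → ℝ)) : Prop :=
  ∃ I : Set (Fin m), I.Nonempty ∧ Iᶜ.Nonempty ∧
    W ⊓ coordSubspace I ≠ ⊥ ∧ W ⊓ coordSubspace Iᶜ ≠ ⊥ ∧
    Disjoint (W ⊓ coordSubspace I) (W ⊓ coordSubspace Iᶜ) ∧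
    W = (W ⊓ coordSubspace I) ⊔ (W ⊓ coordSubspace Iᶜ)

lemma mem_coordSubspace {m : ℕ} {I : Set (Fin m)} {x : Fin m → ℝ} :
    x ∈ coordSubspace I ↔ ∀ j ∉ I, x j = 0 := Iff.rfl

lemma coordSubspace_mono {m : ℕ} {I J : Set (Fin m)} (h : I ⊆ J) :
    coordSubspace I ≤ coordSubspace J := by
  intro x hx j hj
  exact hx j (fun hI => hj (h hI))

lemma coordSubspace_disjoint {m : ℕ} (I : Set (Fin m)) :
    Disjoint (coordSubspace I) (coordSubspace Iᶜ) := by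
  rw [Submodule.disjoint_def]
  intro x hx hx'
  funext j
  by_cases h : j ∈ I
  · exact hx' j (by simpa using h)
  · exact hx j h

lemma decomposes_of {m : ℕ} (W W₁ W₂ : Submodule ℝ (Fin m → ℝ)) (I : Set (Fin m))
    (h1 : W₁ ≤ coordSubspace I) (h2 : W₂ ≤ coordSubspace Iᶜ)
    (hne1 : W₁ ≠ ⊥) (hne2 : W₂ ≠ ⊥) (hW : W = W₁ ⊔ W₂) :
    DecomposesCoord W := by
  obtain ⟨a, haW, ha0⟩ := Submodule.exists_mem_ne_zero_of_ne_bot hne1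
  obtain ⟨b, hbW, hb0⟩ := Submodule.exists_mem_ne_zero_of_ne_bot hne2
  have hIne : I.Nonempty := by
    by_contra h
    rw [Set.not_nonempty_iff_eq_empty] at h
    apply ha0
    funext j
    exact h1 haW j (by simp [h])
  have hIcne : Iᶜ.Nonempty := by
    by_contra h
    rw [Set.not_nonempty_iff_eq_empty] at h
    apply hb0
    funext j
    exact h2 hbW j (by simp [h])
  have hW1le : W₁ ≤ W := by rw [hW]; exact le_sup_left
  have hW2le : W₂ ≤ W := by rw [hW]; exact le_sup_right
  refine ⟨I, hIne, hIcne, ?_, ?_, ?_, ?_⟩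
  · intro h
    apply ha0
    have : a ∈ W ⊓ coordSubspace I := ⟨hW1le haW, h1 haW⟩
    rw [h] at this
    exact this
  · intro h
    apply hb0
    have : b ∈ W ⊓ coordSubspace Iᶜ := ⟨hW2le hbW, h2 hbW⟩
    rw [h] at this
    exact this
  · exact Disjoint.mono inf_le_right inf_le_right (coordSubspace_disjoint I)
  · refine le_antisymm ?_ (sup_le inf_le_left inf_le_left)
    conv_lhs => rw [hW]
    exact sup_le_sup (le_inf hW1le h1) (le_inf hW2le h2)

lemma coord_sup_compl {m : ℕ} (I : Set (Fin m)) [DecidablePred (· ∈ I)] :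
    coordSubspace I ⊔ coordSubspace Iᶜ = ⊤ := by
  rw [eq_top_iff]
  intro x _
  have hx : x = (fun j => if j ∈ I then x j else 0) + (fun j => if j ∈ I then 0 else x j) := by
    funext j
    by_cases h : j ∈ I <;> simp [h]
  rw [hx]
  exact Submodule.add_mem_sup
    (fun j hj => by simp [hj]) (fun j hj => by simp [show j ∈ I by simpa using hj])

lemma visible_closure {m : ℕ} {v : Fin m → Fin m → ℝ} (hvis : ∀ i, VisibleAt i (v i))
    {z : Fin m → ℝ} (hz : ∀ i, ∑ j, v i j * z j = 0)
    {i : Fin m} (hmax : ∀ j, z j ≤ z i) (h0 : 0 ≤ z i)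
    {j : Fin m} (hji : j ≠ i) (hvij : v i j ≠ 0) : z j = z i := by
  obtain ⟨hnn, hsum⟩ := hvis i
  have hterm : ∀ k ∈ Finset.univ.erase i, 0 ≤ v i k * (z i - z k) := by
    intro k hk
    exact mul_nonneg (hnn k (Finset.ne_of_mem_erase hk)) (sub_nonneg.2 (hmax k))
  have hsplit : ∑ k ∈ Finset.univ.erase i, v i k * z k = -(v i i * z i) := by
    have h := hz i
    rw [← Finset.add_sum_erase _ _ (Finset.mem_univ i)] at h
    linarith
  have hcalc : ∑ k ∈ Finset.univ.erase i, v i k * (z i - z k)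
      = ((∑ k ∈ Finset.univ.erase i, v i k) + v i i) * z i := by
    simp only [mul_sub]
    rw [Finset.sum_sub_distrib, hsplit, ← Finset.sum_mul]
    ring
  have hle : ∑ k ∈ Finset.univ.erase i, v i k * (z i - z k) ≤ 0 := by
    rw [hcalc]
    exact mul_nonpos_of_nonpos_of_nonneg (by linarith) h0
  have hzero := (Finset.sum_eq_zero_iff_of_nonneg hterm).1
    (le_antisymm hle (Finset.sum_nonneg hterm)) j (Finset.mem_erase.2 ⟨hji, Finset.mem_univ j⟩)
  rcases mul_eq_zero.1 hzero with h | h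
  · exact absurd h hvij
  · linarith
theorem stmt_10 {m : ℕ} (hm : 2 ≤ m) (v : Fin m → (Fin m → ℝ))
    (hne : ∀ i, v i ≠ 0) (hvis : ∀ i, VisibleAt i (v i))
    (hnd : ∀ W : Submodule ℝ (Fin m → ℝ),
      W ≤ Submodule.span ℝ (Set.range v) → W ≠ ⊥ → ¬ DecomposesCoord W) :
    Module.finrank ℝ ↥(Submodule.span ℝ (Set.range v)) = m - 1 := by
  classical
  have hm0 : 0 < m := by omega
  set V := Submodule.span ℝ (Set.range v) with hVdef
  set A : Matrix (Fin m) (Fin m) ℝ := Matrix.of v with hAdef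
  set f := A.mulVecLin with hfdef
  have hkermem : ∀ x : Fin m → ℝ, x ∈ LinearMap.ker f ↔ ∀ i, ∑ j, v i j * x j = 0 := by
    intro x
    rw [LinearMap.mem_ker, hfdef, funext_iff]
    simp [Matrix.mulVecLin_apply, Matrix.mulVec, dotProduct, hAdef]
  have i₀ : Fin m := ⟨0, hm0⟩
  -- upper bound: V ≠ ⊤
  have hVtop : V ≠ ⊤ := by
    intro htop
    refine hnd V le_rfl ?_ ?_
    · intro hbot
      apply hne ⟨0, hm0⟩
      have : v ⟨0, hm0⟩ ∈ V := Submodule.subset_span (Set.mem_range_self _)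
      rw [hbot] at this
      exact this
    · refine decomposes_of V (coordSubspace {(⟨0, hm0⟩ : Fin m)})
        (coordSubspace {(⟨0, hm0⟩ : Fin m)}ᶜ) {(⟨0, hm0⟩ : Fin m)} le_rfl le_rfl ?_ ?_ ?_
      · rw [Submodule.ne_bot_iff]
        refine ⟨Pi.single ⟨0, hm0⟩ 1, fun j hj => ?_, ?_⟩
        · exact Pi.single_eq_of_ne (by simpa using hj) 1
        · intro h
          have := congrFun h ⟨0, hm0⟩
          simp at this
      · rw [Submodule.ne_bot_iff]
        have h10 : (⟨1, by omega⟩ : Fin m) ≠ ⟨0, hm0⟩ := by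
          intro h; simpa using congrArg Fin.val h
        refine ⟨Pi.single ⟨1, by omega⟩ 1, fun j hj => ?_, ?_⟩
        · have : j = ⟨0, hm0⟩ := by simpa using hj
          rw [this]; exact Pi.single_eq_of_ne h10.symm 1
        · intro h
          have := congrFun h ⟨1, by omega⟩
          simp at this
      · rw [htop, coord_sup_compl]
  -- rank + nullity
  have hVrank : Module.finrank ℝ V = A.rank := by
    rw [Matrix.rank_eq_finrank_span_row]
    rfl
  have hrn : Module.finrank ℝ V + Module.finrank ℝ (LinearMap.ker f) = m := by
    rw [hVrank]
    have := LinearMap.finrank_range_add_finrank_ker f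
    rw [Module.finrank_fin_fun] at this
    exact this
  have hVlt : Module.finrank ℝ V < m := by
    have := Submodule.finrank_lt (K := ℝ) (V := Fin m → ℝ) hVtop
    rwa [Module.finrank_fin_fun] at this
  -- kernel dimension ≤ 1
  have hker1 : Module.finrank ℝ (LinearMap.ker f) ≤ 1 := by
    by_contra hgt
    push_neg at hgt
    have hkerbot : LinearMap.ker f ≠ ⊥ := by
      intro h
      rw [h, finrank_bot] at hgt
      omega
    obtain ⟨x, hxK, hx0⟩ := Submodule.exists_mem_ne_zero_of_ne_bot hkerbot
    have hspanlt : ¬ (LinearMap.ker f ≤ Submodule.span ℝ {x}) := by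
      intro h
      have h1 := Submodule.finrank_mono h
      rw [finrank_span_singleton hx0] at h1
      omega
    rw [SetLike.not_le_iff_exists] at hspanlt
    obtain ⟨y, hyK, hyx⟩ := hspanlt
    -- build z ∈ ker, z ≠ 0, with a zero coordinate
    obtain ⟨j₀, hj₀⟩ : ∃ j, x j ≠ 0 := by
      by_contra h
      push_neg at h
      exact hx0 (funext h)
    set z : Fin m → ℝ := y - (y j₀ / x j₀) • x with hzdef
    have hzK : z ∈ LinearMap.ker f := Submodule.sub_mem _ hyK (Submodule.smul_mem _ _ hxK)
    have hz0 : z ≠ 0 := by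
      intro h
      apply hyx
      rw [Submodule.mem_span_singleton]
      exact ⟨y j₀ / x j₀, by rw [eq_comm, ← sub_eq_zero]; exact h⟩
    have hzj₀ : z j₀ = 0 := by
      simp only [hzdef, Pi.sub_apply, Pi.smul_apply, smul_eq_mul]
      field_simp
      ring
    have hz : ∀ i, ∑ j, v i j * z j = 0 := (hkermem z).1 hzK
    have hznegker : ∀ i, ∑ j, v i j * (-z) j = 0 := by
      intro i
      simp only [Pi.neg_apply, mul_neg, Finset.sum_neg_distrib, hz i, neg_zero]
    obtain ⟨imax, -, hmax'⟩ := Finset.exists_max_image Finset.univ z ⟨⟨0, hm0⟩, Finset.mem_univ _⟩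
    obtain ⟨imin, -, hmin'⟩ := Finset.exists_min_image Finset.univ z ⟨⟨0, hm0⟩, Finset.mem_univ _⟩
    have hmax : ∀ j, z j ≤ z imax := fun j => hmax' j (Finset.mem_univ j)
    have hmin : ∀ j, z imin ≤ z j := fun j => hmin' j (Finset.mem_univ j)
    have hM0 : 0 ≤ z imax := hzj₀ ▸ hmax j₀
    have hm'0 : z imin ≤ 0 := hzj₀ ▸ hmin j₀
    have hMm : z imin < z imax := by
      rcases lt_or_ge (z imin) (z imax) with h | h
      · exact h
      · exfalso
        apply hz0
        funext j
        have h1 : z j = z imax := le_antisymm (hmax j) (le_trans h (hmin j))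
        have h2 : z imax = 0 := le_antisymm (by linarith [hmin j₀, hzj₀ ▸ (le_trans h (hmin j₀))])
          hM0
        simp [h1, h2]
    set S : Set (Fin m) := {j | z j = z imax} with hSdef
    set T : Set (Fin m) := {j | z j = z imin} with hTdef
    set W₁ := Submodule.span ℝ (v '' S) with hW₁def
    set W₂ := Submodule.span ℝ (v '' T) with hW₂def
    have hW₁I : W₁ ≤ coordSubspace S := by
      rw [hW₁def, Submodule.span_le]
      rintro _ ⟨i, hiS, rfl⟩ j hj
      by_contra hv
      rcases eq_or_ne j i with rfl | hji
      · exact hj hiS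
      · refine hj ?_
        show z j = z imax
        rw [← hiS]
        exact visible_closure hvis hz (fun k => hiS ▸ hmax k) (hiS ▸ hM0) hji hv
    have hW₂T : W₂ ≤ coordSubspace T := by
      rw [hW₂def, Submodule.span_le]
      rintro _ ⟨i, hiT, rfl⟩ j hj
      by_contra hv
      rcases eq_or_ne j i with rfl | hji
      · exact hj hiT
      · refine hj ?_
        show z j = z imin
        have hmaxneg : ∀ k, (-z) k ≤ (-z) i := by
          intro k
          simp only [Pi.neg_apply, neg_le_neg_iff]
          exact hiT ▸ hmin k
        have h0neg : 0 ≤ (-z) i := by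
          simp only [Pi.neg_apply]
          exact hiT ▸ neg_nonneg.2 hm'0
        have := visible_closure hvis hznegker hmaxneg h0neg hji hv
        simp only [Pi.neg_apply, neg_inj] at this
        rw [this, hiT]
    have hTS : T ⊆ Sᶜ := by
      intro j hj hjS
      have h1 : z j = z imin := hj
      have h2 : z j = z imax := hjS
      linarith
    refine hnd (W₁ ⊔ W₂) ?_ ?_ ?_
    · exact sup_le
        (Submodule.span_mono ((Set.image_subset_range v S)))
        (Submodule.span_mono ((Set.image_subset_range v T)))
    · intro h
      apply hne imax
      have hmem : v imax ∈ W₁ ⊔ W₂ := le_sup_left (a := W₁)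
        (Submodule.subset_span ⟨imax, rfl, rfl⟩)
      rw [h] at hmem
      exact hmem
    · exact decomposes_of _ W₁ W₂ S hW₁I ((hW₂T).trans (coordSubspace_mono hTS)) 
        (fun h => hne imax (by
          have : v imax ∈ W₁ := Submodule.subset_span ⟨imax, rfl, rfl⟩
          rw [h] at this; exact this))
        (fun h => hne imin (by
          have : v imin ∈ W₂ := Submodule.subset_span ⟨imin, rfl, rfl⟩
          rw [h] at this; exact this))
        rfl
  omega
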